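/- Let n ≥ 3, let m_1 < ... < m_n be a generalized arithmetic sequence with m_i = h·m_1 + (i-1)d for i ≥ 2, h > 1, h | d, gcd(m_1, d) = 1. Set δ := ph + d + h where m_1 = p(n-1)+s, s ∈ {1,...,n-1}, δ' := δ/h, and for j ∈ {0,...,δ'-1} let β_j, σ_j, λ_j be defined by β_j = min{b ∈ ℤ⁺ : jhm_1 + b m_2 ∈ ℕm_3 + ... + ℕm_n} and jhm_1 + β_j m_2 = m_{σ_j} + λ_j m_n, with the conventions σ_{δ'} := s+1, λ_{δ'} := p, β_{δ'} := 0. Then for all j ∈ {1,...,δ'}: if σ_j ≠ n then σ_{j-1} = σ_j + 1, λ_{j-1} = λ_j, β_{j-1} = β_j + 1; and if σ_j = n then σ_{j-1} = 3, λ_{j-1} = λ_j + 1, β_{j-1} = β_j + 2. -/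

import Mathlib

set_option maxHeartbeats 1000000

/-- Recursion for the invariants βⱼ, σⱼ, λⱼ of a generalized arithmetic sequence. -/
theorem stmt_11 (n h d m1 p s : ℕ) (m : ℕ → ℕ) (β σ lam : ℕ → ℕ)
    (hn : 3 ≤ n) (hh : 2 ≤ h) (hd : 1 ≤ d) (hm1 : 1 ≤ m1)
    (hdvd : h ∣ d) (hgcd : Nat.gcd m1 d = 1)
    (hm0 : m 1 = m1)
    (hm : ∀ i, 2 ≤ i → i ≤ n → m i = h * m1 + (i - 1) * d)
    (hdiv : m1 = p * (n - 1) + s) (hs1 : 1 ≤ s) (hs2 : s ≤ n - 1)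
    (hβlast : β ((p * h + d + h) / h) = 0)
    (hσlast : σ ((p * h + d + h) / h) = s + 1)
    (hlamlast : lam ((p * h + d + h) / h) = p)
    (hβ : ∀ j, j < (p * h + d + h) / h →
      IsLeast {b : ℕ | 0 < b ∧
          ∃ δ : ℕ → ℕ, j * h * m1 + b * m 2 = ∑ i ∈ Finset.Icc 3 n, δ i * m i} (β j))
    (hσrange : ∀ j, j < (p * h + d + h) / h → 3 ≤ σ j ∧ σ j ≤ n)
    (heq : ∀ j, j ≤ (p * h + d + h) / h →
      j * h * m1 + β j * m 2 = m (σ j) + lam j * m n) :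
    ∀ j, 1 ≤ j → j ≤ (p * h + d + h) / h →
      (σ j ≠ n → σ (j - 1) = σ j + 1 ∧ lam (j - 1) = lam j ∧ β (j - 1) = β j + 1) ∧
      (σ j = n → σ (j - 1) = 3 ∧ lam (j - 1) = lam j + 1 ∧ β (j - 1) = β j + 2) := by
  obtain ⟨e, he⟩ := hdvd
  have hh0 : 0 < h := by omega
  have he1 : 1 ≤ e := by
    rcases Nat.eq_zero_or_pos e with h0 | h0
    · subst h0; simp at he; omega
    · exact h0
  have hδ' : (p * h + d + h) / h = p + e + 1 := by
    rw [he, show p * h + h * e + h = (p + e + 1) * h by ring, Nat.mul_div_cancel _ hh0]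
  rw [hδ'] at hβlast hσlast hlamlast hβ hσrange heq
  rw [hδ']
  have hgcd_e : Nat.Coprime m1 e := Nat.Coprime.coprime_dvd_right ⟨h, by rw [he]; ring⟩ hgcd
  -- basic m-values
  have hm2 : m 2 = h * m1 + d := by rw [hm 2 le_rfl (by omega)]; norm_num
  have hm3 : m 3 = h * m1 + 2 * d := by rw [hm 3 (by omega) hn]
  have hmn : m n = h * m1 + (n - 1) * d := hm n (by omega) le_rfl
  have hn1 : (1 : ℕ) ≤ n := by omega
  have hdivZ : (m1 : ℤ) = p * ((n : ℤ) - 1) + s := by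
    have := hdiv; zify [hn1] at this; exact this
  have hmnZ : (m n : ℤ) = (h : ℤ) * m1 + ((n : ℤ) - 1) * d := by
    have := hmn; zify [hn1] at this; exact this
  have hm2Z : (m 2 : ℤ) = (h : ℤ) * m1 + d := by exact_mod_cast hm2
  have hm3Z : (m 3 : ℤ) = (h : ℤ) * m1 + 2 * d := by exact_mod_cast hm3
  have hX : (2 : ℤ) ≤ (h : ℤ) * m1 := by
    have : 2 * 1 ≤ h * m1 := Nat.mul_le_mul hh hm1
    exact_mod_cast (by omega : 2 ≤ h * m1)
  have hdZ : (1 : ℤ) ≤ (d : ℤ) := by exact_mod_cast hd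
  -- uniqueness lemma
  have hU : ∀ a c x y : ℕ, 3 ≤ a → a ≤ n → 3 ≤ c → c ≤ n →
      m a + x * m n = m c + y * m n → a = c ∧ x = y := by
    intro a c x y ha3 han hc3 hcn hxy
    rw [hm a (by omega) han, hm c (by omega) hcn, hmn] at hxy
    have hE : ((h : ℤ) * m1 + ((a : ℤ) - 1) * d) + x * ((h : ℤ) * m1 + ((n : ℤ) - 1) * d)
        = ((h : ℤ) * m1 + ((c : ℤ) - 1) * d) + y * ((h : ℤ) * m1 + ((n : ℤ) - 1) * d) := by
      zify [show 1 ≤ a by omega, show 1 ≤ c by omega, hn1] at hxy; exact hxy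
    rcases lt_trichotomy x y with hlt | heqxy | hlt
    · exfalso
      have key : ((a : ℤ) - c) * d = ((y : ℤ) - x) * ((h : ℤ) * m1 + ((n : ℤ) - 1) * d) := by
        linear_combination hE
      have hM0 : (0 : ℤ) ≤ (h : ℤ) * m1 + ((n : ℤ) - 1) * d := by
        have : (0:ℤ) ≤ ((n:ℤ)-1) * d := mul_nonneg (by omega) (by linarith only [hdZ])
        linarith
      have f2 : (h : ℤ) * m1 + ((n : ℤ) - 1) * d ≤ ((y : ℤ) - x) * ((h : ℤ) * m1 + ((n : ℤ) - 1) * d) :=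
        le_mul_of_one_le_left hM0 (by omega)
      have f1 : ((a : ℤ) - c) * d ≤ ((n : ℤ) - 3) * d :=
        mul_le_mul_of_nonneg_right (by omega) (by linarith only [hdZ])
      linarith only [key, f1, f2, hX, hdZ]
    · subst heqxy
      have key : ((a : ℤ) - c) * d = 0 := by linear_combination hE
      have : (a : ℤ) - c = 0 := by
        rcases mul_eq_zero.mp key with h1 | h1
        · exact h1
        · exfalso; omega
      exact ⟨by omega, rfl⟩
    · exfalso
      have key : ((c : ℤ) - a) * d = ((x : ℤ) - y) * ((h : ℤ) * m1 + ((n : ℤ) - 1) * d) := by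
        linear_combination -hE
      have hM0 : (0 : ℤ) ≤ (h : ℤ) * m1 + ((n : ℤ) - 1) * d := by
        have : (0:ℤ) ≤ ((n:ℤ)-1) * d := mul_nonneg (by omega) (by linarith only [hdZ])
        linarith
      have f2 : (h : ℤ) * m1 + ((n : ℤ) - 1) * d ≤ ((x : ℤ) - y) * ((h : ℤ) * m1 + ((n : ℤ) - 1) * d) :=
        le_mul_of_one_le_left hM0 (by omega)
      have f1 : ((c : ℤ) - a) * d ≤ ((n : ℤ) - 3) * d :=
        mul_le_mul_of_nonneg_right (by omega) (by linarith only [hdZ])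
      linarith only [key, f1, f2, hX, hdZ]
  -- representation lemma
  have hrep : ∀ a L : ℕ, 3 ≤ a → a ≤ n →
      m a + L * m n = ∑ x ∈ Finset.Icc 3 n,
        ((if x = a then 1 else 0) + (if x = n then L else 0)) * m x := by
    intro a L ha3 han
    have hcg : ∀ x ∈ Finset.Icc 3 n,
        ((if x = a then 1 else 0) + (if x = n then L else 0)) * m x
          = (if x = a then m x else 0) + (if x = n then L * m x else 0) := by
      intro x _; split_ifs <;> ring
    rw [Finset.sum_congr rfl hcg, Finset.sum_add_distrib, Finset.sum_ite_eq', Finset.sum_ite_eq']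
    simp [Finset.mem_Icc, ha3, han, hn]
  -- lower bound lemma
  have hL : ∀ J b : ℕ, ∀ δf : ℕ → ℕ, 1 ≤ b →
      (J * h * m1 + b * m 2 = ∑ x ∈ Finset.Icc 3 n, δf x * m x) →
      (s : ℤ) + ((n : ℤ) - 1) * ((p : ℤ) + (e : ℤ) - (J : ℤ)) ≤ ((n : ℤ) - 2) * (b : ℤ) := by
    intro J b δf hb hrepr
    have hc : ∀ x ∈ Finset.Icc 3 n, δf x * m x = δf x * (h * m1) + (δf x * (x - 1)) * d := by
      intro x hx
      obtain ⟨hx1, hx2⟩ := Finset.mem_Icc.mp hx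
      rw [hm x (by omega) hx2]; ring
    have hsum : J * h * m1 + b * m 2 =
        (∑ x ∈ Finset.Icc 3 n, δf x) * (h * m1) + (∑ x ∈ Finset.Icc 3 n, δf x * (x - 1)) * d := by
      rw [hrepr, Finset.sum_congr rfl hc, Finset.sum_add_distrib, ← Finset.sum_mul, ← Finset.sum_mul]
    have h2A : 2 * (∑ x ∈ Finset.Icc 3 n, δf x) ≤ ∑ x ∈ Finset.Icc 3 n, δf x * (x - 1) := by
      rw [Finset.mul_sum]
      apply Finset.sum_le_sum
      intro x hx
      obtain ⟨hx1, hx2⟩ := Finset.mem_Icc.mp hx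
      calc 2 * δf x = δf x * 2 := by ring
        _ ≤ δf x * (x - 1) := Nat.mul_le_mul_left _ (by omega)
    have hBle : (∑ x ∈ Finset.Icc 3 n, δf x * (x - 1)) ≤ (n - 1) * ∑ x ∈ Finset.Icc 3 n, δf x := by
      rw [Finset.mul_sum]
      apply Finset.sum_le_sum
      intro x hx
      obtain ⟨hx1, hx2⟩ := Finset.mem_Icc.mp hx
      calc δf x * (x - 1) ≤ δf x * (n - 1) := Nat.mul_le_mul_left _ (by omega)
        _ = (n - 1) * δf x := mul_comm _ _
    obtain ⟨A, hAdef⟩ : ∃ A, A = ∑ x ∈ Finset.Icc 3 n, δf x := ⟨_, rfl⟩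
    obtain ⟨B, hBdef⟩ : ∃ B, B = ∑ x ∈ Finset.Icc 3 n, δf x * (x - 1) := ⟨_, rfl⟩
    rw [← hAdef, ← hBdef] at hsum h2A hBle
    have hsumZ : (J : ℤ) * h * m1 + b * ((h : ℤ) * m1 + d) = A * ((h : ℤ) * m1) + B * d := by
      rw [hm2] at hsum; exact_mod_cast hsum
    have heZ : (d : ℤ) = (h : ℤ) * e := by exact_mod_cast he
    have hcancel : ((J : ℤ) + b - A) * m1 = ((B : ℤ) - b) * e := by
      have h1 : (h : ℤ) * (((J : ℤ) + b - A) * m1) = (h : ℤ) * (((B : ℤ) - b) * e) := by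
        linear_combination hsumZ + ((B : ℤ) - (b : ℤ)) * heZ
      exact mul_left_cancel₀ (by exact_mod_cast hh0.ne' : (h : ℤ) ≠ 0) h1
    have hcop : IsCoprime (m1 : ℤ) (e : ℤ) := by
      rw [Nat.isCoprime_iff_coprime]; exact hgcd_e
    have hdvdv : (m1 : ℤ) ∣ ((B : ℤ) - b) * e := ⟨(J : ℤ) + b - A, by linear_combination -hcancel⟩
    obtain ⟨k, hk⟩ := hcop.dvd_of_dvd_mul_right hdvdv
    have hm1Z : (1 : ℤ) ≤ (m1 : ℤ) := by exact_mod_cast hm1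
    have heZ1 : (1 : ℤ) ≤ (e : ℤ) := by exact_mod_cast he1
    have hu : (J : ℤ) + b - A = k * e := by
      have h1 : ((J : ℤ) + b - A) * m1 = (k * e) * m1 := by rw [hcancel, hk]; ring
      exact mul_right_cancel₀ (Int.natCast_ne_zero.mpr (by omega)) h1
    have hbZ : (1 : ℤ) ≤ (b : ℤ) := by exact_mod_cast hb
    have h2AZ : 2 * (A : ℤ) ≤ (B : ℤ) := by exact_mod_cast h2A
    have hk1 : 1 ≤ k := by
      by_contra hk0
      push_neg at hk0
      have hk0' : k ≤ 0 := by omega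
      have hmk : (m1 : ℤ) * k ≤ 0 := mul_nonpos_of_nonneg_of_nonpos (by positivity) hk0'
      have hke : k * (e : ℤ) ≤ 0 := mul_nonpos_of_nonpos_of_nonneg hk0' (by positivity)
      have hJ0 : (0 : ℤ) ≤ (J : ℤ) := by positivity
      linarith only [hk, hu, hmk, hke, h2AZ, hbZ, hJ0]
    have hBleZ : (B : ℤ) ≤ ((n : ℤ) - 1) * A := by
      have := hBle; zify [hn1] at this; exact this
    have f1 : (m1 : ℤ) ≤ m1 * k := le_mul_of_one_le_right (by positivity) hk1
    have f2 : ((n : ℤ) - 1) * e ≤ ((n : ℤ) - 1) * (k * e) := by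
      have h1 : (e : ℤ) ≤ k * e := le_mul_of_one_le_left (by positivity) hk1
      exact mul_le_mul_of_nonneg_left h1 (by omega)
    have hAe : (A : ℤ) = (J : ℤ) + b - k * e := by linarith only [hu]
    have hBe : (B : ℤ) = (b : ℤ) + m1 * k := by linarith only [hk]
    rw [hAe, hBe] at hBleZ
    linarith only [hBleZ, f1, f2, hdivZ]
  -- the induction step
  have hstep : ∀ j, 1 ≤ j → j ≤ p + e + 1 →
      (j + β j = e + lam j + 1) → (σ j + lam j * (n - 1) = β j + m1 + 1) →
      2 ≤ σ j → σ j ≤ n →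
      (σ (j - 1) = (if σ j = n then 3 else σ j + 1)) ∧
      (lam (j - 1) = (if σ j = n then lam j + 1 else lam j)) ∧
      (β (j - 1) = (if σ j = n then β j + 2 else β j + 1)) := by
    intro j hj1 hj2 I1 I2 R1 R2
    have hjlt : j - 1 < p + e + 1 := by omega
    have hle := hβ (j - 1) hjlt
    have hσr := hσrange (j - 1) hjlt
    have e1 := heq j hj2
    have e0 := heq (j - 1) (by omega)
    have e1' : (j : ℤ) * h * m1 + (β j : ℤ) * (m 2 : ℤ) = (m (σ j) : ℤ) + (lam j : ℤ) * (m n : ℤ) := by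
      exact_mod_cast e1
    have I1' : (j : ℤ) + (β j : ℤ) = (e : ℤ) + (lam j : ℤ) + 1 := by exact_mod_cast I1
    have I2' : (σ j : ℤ) + (lam j : ℤ) * ((n : ℤ) - 1) = (β j : ℤ) + (m1 : ℤ) + 1 := by
      have := I2; zify [hn1] at this; exact this
    have hn2Z : (0 : ℤ) < (n : ℤ) - 2 := by omega
    obtain ⟨hpos0, δf0, hrep0⟩ := hle.1
    have hlow := hL (j - 1) (β (j - 1)) δf0 hpos0 hrep0
    have hlow' : (s : ℤ) + ((n : ℤ) - 1) * ((p : ℤ) + (e : ℤ) + 1 - (j : ℤ)) ≤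
        ((n : ℤ) - 2) * (β (j - 1) : ℤ) := by
      push_cast [Nat.cast_sub hj1] at hlow; linarith only [hlow]
    by_cases hσn : σ j = n
    · -- wrap case
      have hσZ : (σ j : ℤ) = (n : ℤ) := by exact_mod_cast hσn
      have hcand : (j - 1) * h * m1 + (β j + 2) * m 2 = m 3 + (lam j + 1) * m n := by
        zify [hj1]
        rw [hσn] at e1'
        linear_combination e1' + 2 * hm2Z - hm3Z
      have hub : β (j - 1) ≤ β j + 2 :=
        hle.2 ⟨by omega, ⟨_, hcand.trans (hrep 3 (lam j + 1) le_rfl hn)⟩⟩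
      have hkey : (s : ℤ) + ((n : ℤ) - 1) * ((p : ℤ) + (e : ℤ) + 1 - (j : ℤ)) =
          ((n : ℤ) - 2) * ((β j : ℤ) + 1) + 1 := by
        linear_combination ((1 : ℤ) - (n : ℤ)) * I1' - I2' - hdivZ + hσZ
      have hβval : β (j - 1) = β j + 2 := by
        by_contra hne
        have h1 : β (j - 1) ≤ β j + 1 := by omega
        have h2 : ((n : ℤ) - 2) * (β (j - 1) : ℤ) ≤ ((n : ℤ) - 2) * ((β j : ℤ) + 1) := by
          apply mul_le_mul_of_nonneg_left _ (by linarith only [hn2Z])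
          exact_mod_cast h1
        linarith only [hlow', hkey, h2]
      have h12 : m (σ (j - 1)) + lam (j - 1) * m n = m 3 + (lam j + 1) * m n := by
        rw [hβval] at e0
        linarith only [e0, hcand]
      obtain ⟨hσeq, hlameq⟩ := hU (σ (j - 1)) 3 (lam (j - 1)) (lam j + 1)
        hσr.1 hσr.2 le_rfl hn h12
      rw [if_pos hσn, if_pos hσn, if_pos hσn]
      exact ⟨hσeq, hlameq, hβval⟩
    · -- shift case
      have hσlt : σ j + 1 ≤ n := by omega
      have emσ : (m (σ j + 1) : ℤ) = (h : ℤ) * m1 + (σ j : ℤ) * d := by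
        have h1 := hm (σ j + 1) (by omega) hσlt
        rw [Nat.add_sub_cancel] at h1
        exact_mod_cast h1
      have emσ0 : (m (σ j) : ℤ) = (h : ℤ) * m1 + ((σ j : ℤ) - 1) * d := by
        have h1 := hm (σ j) R1 R2
        zify [show 1 ≤ σ j by omega] at h1; exact h1
      have hcand : (j - 1) * h * m1 + (β j + 1) * m 2 = m (σ j + 1) + lam j * m n := by
        zify [hj1]
        linear_combination e1' + hm2Z - emσ + emσ0
      have hub : β (j - 1) ≤ β j + 1 :=
        hle.2 ⟨by omega, ⟨_, hcand.trans (hrep (σ j + 1) (lam j) (by omega) hσlt)⟩⟩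
      have hkey : (s : ℤ) + ((n : ℤ) - 1) * ((p : ℤ) + (e : ℤ) + 1 - (j : ℤ)) =
          ((n : ℤ) - 2) * (β j : ℤ) + ((σ j : ℤ) - 1) := by
        linear_combination ((1 : ℤ) - (n : ℤ)) * I1' - I2' - hdivZ
      have hβval : β (j - 1) = β j + 1 := by
        by_contra hne
        have h1 : β (j - 1) ≤ β j := by omega
        have h2 : ((n : ℤ) - 2) * (β (j - 1) : ℤ) ≤ ((n : ℤ) - 2) * (β j : ℤ) := by
          apply mul_le_mul_of_nonneg_left _ (by linarith only [hn2Z])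
          exact_mod_cast h1
        have hσ2Z : (2 : ℤ) ≤ (σ j : ℤ) := by exact_mod_cast R1
        linarith only [hlow', hkey, h2, hσ2Z]
      have h12 : m (σ (j - 1)) + lam (j - 1) * m n = m (σ j + 1) + lam j * m n := by
        rw [hβval] at e0
        linarith only [e0, hcand]
      obtain ⟨hσeq, hlameq⟩ := hU (σ (j - 1)) (σ j + 1) (lam (j - 1)) (lam j)
        hσr.1 hσr.2 (by omega) hσlt h12
      rw [if_neg hσn, if_neg hσn, if_neg hσn]
      exact ⟨hσeq, hlameq, hβval⟩
  -- invariant by induction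
  have hinv : ∀ i, i ≤ p + e + 1 →
      ((p + e + 1 - i) + β (p + e + 1 - i) = e + lam (p + e + 1 - i) + 1) ∧
      (σ (p + e + 1 - i) + lam (p + e + 1 - i) * (n - 1) = β (p + e + 1 - i) + m1 + 1) ∧
      2 ≤ σ (p + e + 1 - i) ∧ σ (p + e + 1 - i) ≤ n := by
    intro i
    induction i with
    | zero =>
      intro _
      simp only [Nat.sub_zero]
      refine ⟨by omega, ?_, by omega, by omega⟩
      rw [hσlast, hlamlast, hβlast, hdiv]
      ring
    | succ i ih =>
      intro hi
      have hprev := ih (by omega)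
      obtain ⟨iI1, iI2, iR1, iR2⟩ := hprev
      have hj1 : 1 ≤ p + e + 1 - i := by omega
      obtain ⟨hs1', hs2', hs3'⟩ := hstep (p + e + 1 - i) hj1 (by omega) iI1 iI2 iR1 iR2
      have hsub : p + e + 1 - (i + 1) = (p + e + 1 - i) - 1 := by omega
      rw [hsub]
      by_cases hσn : σ (p + e + 1 - i) = n
      · rw [if_pos hσn] at hs1' hs2' hs3'
        refine ⟨by omega, ?_, by omega, by omega⟩
        rw [hs1', hs2', hs3']
        have hexp : (lam (p + e + 1 - i) + 1) * (n - 1) = lam (p + e + 1 - i) * (n - 1) + (n - 1) := by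
          ring
        rw [hexp]
        rw [hσn] at iI2
        omega
      · rw [if_neg hσn] at hs1' hs2' hs3'
        refine ⟨by omega, ?_, by omega, by omega⟩
        rw [hs1', hs2', hs3']
        omega
  -- conclude
  intro j hj1 hj2
  have hInvj := hinv (p + e + 1 - j) (by omega)
  rw [show p + e + 1 - (p + e + 1 - j) = j by omega] at hInvj
  obtain ⟨I1, I2, R1, R2⟩ := hInvj
  obtain ⟨hs1', hs2', hs3'⟩ := hstep j hj1 hj2 I1 I2 R1 R2
  constructor
  · intro hne
    rw [if_neg hne] at hs1' hs2' hs3'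
    exact ⟨hs1', hs2', hs3'⟩
  · intro hyes
    rw [if_pos hyes] at hs1' hs2' hs3'
    exact ⟨hs1', hs2', hs3'⟩
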